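/- Let σ be an alternating bilinear form on V that tames J, and let W ⊆ V be a nonzero subspace such that β(σ) · sin(∠_M(W, JW)) < α(σ). Then for every nonzero x ∈ W one has σ(x, P_W(Jx)) > 0, where P_W denotes the orthogonal projection onto W; in particular, the restriction of σ to W is nondegenerate, i.e. W is a σ-symplectic subspace. -/

import Mathlib

open Real

section aux
variable {V : Type*} [NormedAddCommGroup V] [InnerProductSpace ℝ V]

lemma pair_indep {x y : V} (hx : x ≠ 0) (hy : y ≠ 0) (h : (inner ℝ x y : ℝ) = 0) :
    LinearIndependent ℝ ![x, y] := by
  rw [LinearIndependent.pair_iff]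
  intro s t hst
  have h1 : (inner ℝ (s • x + t • y) x : ℝ) = 0 := by rw [hst]; simp
  have h2 : (inner ℝ (s • x + t • y) y : ℝ) = 0 := by rw [hst]; simp
  have e1 : (inner ℝ y x : ℝ) = 0 := by rw [real_inner_comm]; exact h
  rw [inner_add_left, real_inner_smul_left, real_inner_smul_left,
    e1, real_inner_self_eq_norm_sq] at h1
  rw [inner_add_left, real_inner_smul_left, real_inner_smul_left, h,
    real_inner_self_eq_norm_sq] at h2
  have hx' : (0:ℝ) < ‖x‖ ^ 2 := by have := norm_pos_iff.mpr hx; positivity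
  have hy' : (0:ℝ) < ‖y‖ ^ 2 := by have := norm_pos_iff.mpr hy; positivity
  constructor
  · have : s * ‖x‖ ^ 2 = 0 := by linarith
    rcases mul_eq_zero.mp this with hs | h0
    · exact hs
    · exact absurd h0 (ne_of_gt hx')
  · have : t * ‖y‖ ^ 2 = 0 := by linarith
    rcases mul_eq_zero.mp this with ht | h0
    · exact ht
    · exact absurd h0 (ne_of_gt hy')

lemma sigma_bound [FiniteDimensional ℝ V] (σ : V →ₗ[ℝ] V →ₗ[ℝ] ℝ) :
    ∃ C : ℝ, 0 ≤ C ∧ ∀ x y : V, |σ x y| ≤ C * ‖x‖ * ‖y‖ := by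
  let L : V →ₗ[ℝ] (V →L[ℝ] ℝ) :=
    (LinearMap.toContinuousLinearMap.toLinearMap).comp σ
  let B : V →L[ℝ] V →L[ℝ] ℝ := LinearMap.toContinuousLinearMap L
  refine ⟨‖B‖, B.opNorm_nonneg, fun x y => ?_⟩
  have h1 : |σ x y| = ‖B x y‖ := (Real.norm_eq_abs _).symm
  rw [h1]
  calc ‖B x y‖ ≤ ‖B x‖ * ‖y‖ := (B x).le_opNorm y
    _ ≤ (‖B‖ * ‖x‖) * ‖y‖ :=
      mul_le_mul_of_nonneg_right (B.le_opNorm x) (norm_nonneg y)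
    _ = ‖B‖ * ‖x‖ * ‖y‖ := by ring

lemma betaT_bddAbove' [FiniteDimensional ℝ V] (σ : V →ₗ[ℝ] V →ₗ[ℝ] ℝ)
    (halt : ∀ x : V, σ x x = 0) :
    BddAbove {r : ℝ | ∃ x y : V, LinearIndependent ℝ ![x, y] ∧
      r = σ x y / Real.sqrt (‖x‖ ^ 2 * ‖y‖ ^ 2 - (inner ℝ x y : ℝ) ^ 2)} := by
  obtain ⟨C, hC0, hC⟩ := sigma_bound σ
  refine ⟨C, fun r hr => ?_⟩
  obtain ⟨x, y, hind, rfl⟩ := hr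
  set d := Real.sqrt (‖x‖ ^ 2 * ‖y‖ ^ 2 - (inner ℝ x y : ℝ) ^ 2) with hd_def
  rcases eq_or_lt_of_le (Real.sqrt_nonneg (‖x‖ ^ 2 * ‖y‖ ^ 2 - (inner ℝ x y : ℝ) ^ 2)) with hd | hd
  · rw [← hd_def] at hd; rw [← hd, div_zero]; exact hC0
  rw [← hd_def] at hd
  have hx : x ≠ 0 := by
    intro h0
    rw [h0] at hd_def
    simp at hd_def
    rw [hd_def] at hd; simp at hd
  have hxn : (0:ℝ) < ‖x‖ := norm_pos_iff.mpr hx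
  set c : ℝ := (inner ℝ x y : ℝ) / ‖x‖ ^ 2 with hc_def
  set y' := y - c • x with hy'_def
  have hσ : σ x y' = σ x y := by
    simp [hy'_def, map_sub, map_smul, halt]
  have hnorm : ‖x‖ ^ 2 * ‖y'‖ ^ 2 = ‖x‖ ^ 2 * ‖y‖ ^ 2 - (inner ℝ x y : ℝ) ^ 2 := by
    have h1 : (‖y'‖:ℝ) ^ 2 = inner ℝ y' y' := (real_inner_self_eq_norm_sq y').symm
    have h2 : (inner ℝ y' y' : ℝ) = ‖y‖ ^ 2 - 2 * c * inner ℝ x y + c ^ 2 * ‖x‖ ^ 2 := by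
      simp only [hy'_def, inner_sub_left, inner_sub_right, real_inner_smul_left,
        real_inner_smul_right, real_inner_self_eq_norm_sq, real_inner_comm y x]
      rw [norm_smul, Real.norm_eq_abs, mul_pow, sq_abs]
      ring
    rw [h1, h2, hc_def]
    field_simp
    ring
  have hd2 : d = ‖x‖ * ‖y'‖ := by
    rw [hd_def, ← hnorm, ← mul_pow, Real.sqrt_sq (by positivity)]
  have hy'n : (0:ℝ) < ‖y'‖ := by
    rcases (norm_nonneg y').lt_or_eq with h | h
    · exact h
    · exfalso; rw [hd2, ← h, mul_zero] at hd; exact lt_irrefl _ hd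
  rw [div_le_iff₀ hd, hd2]
  calc σ x y = σ x y' := hσ.symm
    _ ≤ |σ x y'| := le_abs_self _
    _ ≤ C * ‖x‖ * ‖y'‖ := hC x y'
    _ = C * (‖x‖ * ‖y'‖) := by ring

end aux

/-- `α(σ) = inf{σ(x,Jx) : ‖x‖ = 1}` for a bilinear form `σ` and `J : V → V`. -/
noncomputable def alphaT {V : Type*} [NormedAddCommGroup V] [InnerProductSpace ℝ V]
    (J : V → V) (σ : V →ₗ[ℝ] V →ₗ[ℝ] ℝ) : ℝ :=
  sInf {r : ℝ | ∃ x : V, ‖x‖ = 1 ∧ r = σ x (J x)}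

/-- `β(σ) = sup{σ(x,y)/√(‖x‖²‖y‖² − ⟨x,y⟩²) : x, y linearly independent}`. -/
noncomputable def betaT {V : Type*} [NormedAddCommGroup V] [InnerProductSpace ℝ V]
    (σ : V →ₗ[ℝ] V →ₗ[ℝ] ℝ) : ℝ :=
  sSup {r : ℝ | ∃ x y : V, LinearIndependent ℝ ![x, y] ∧
    r = σ x y / Real.sqrt (‖x‖ ^ 2 * ‖y‖ ^ 2 - (inner ℝ x y : ℝ) ^ 2)}

/-- `γ(σ) = α(σ)/β(σ)`. -/
noncomputable def gammaT {V : Type*} [NormedAddCommGroup V] [InnerProductSpace ℝ V]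
    (J : V → V) (σ : V →ₗ[ℝ] V →ₗ[ℝ] ℝ) : ℝ :=
  alphaT J σ / betaT σ

/-- The angle `∠(x,y) = arccos(|⟨x,y⟩|/(‖x‖‖y‖)) ∈ [0,π/2]` between two vectors. -/
noncomputable def ang {V : Type*} [NormedAddCommGroup V] [InnerProductSpace ℝ V]
    (x y : V) : ℝ :=
  Real.arccos (|(inner ℝ x y : ℝ)| / (‖x‖ * ‖y‖))

/-- The angle `∠_M(X,y) = inf{∠(x,y) : 0 ≠ x ∈ X}` between a subspace and a vector. -/
noncomputable def angMv {V : Type*} [NormedAddCommGroup V] [InnerProductSpace ℝ V]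
    (X : Submodule ℝ V) (y : V) : ℝ :=
  sInf ((fun x => ang x y) '' {x : V | x ∈ X ∧ x ≠ 0})

/-- The maximal angle `∠_M(X,Y) = sup{∠_M(X,y) : 0 ≠ y ∈ Y}` between two subspaces. -/
noncomputable def angMM {V : Type*} [NormedAddCommGroup V] [InnerProductSpace ℝ V]
    (X Y : Submodule ℝ V) : ℝ :=
  sSup ((fun y => angMv X y) '' {y : V | y ∈ Y ∧ y ≠ 0})

section angfacts
variable {V : Type*} [NormedAddCommGroup V] [InnerProductSpace ℝ V]

lemma ang_nonneg (x y : V) : 0 ≤ ang x y := Real.arccos_nonneg _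

lemma ang_le_pi_div_two (x y : V) : ang x y ≤ π / 2 :=
  Real.arccos_le_pi_div_two.mpr (div_nonneg (abs_nonneg _) (by positivity))

end angfacts

set_option maxHeartbeats 1000000 in
theorem stmt14 {V : Type*} [NormedAddCommGroup V] [InnerProductSpace ℝ V]
    [FiniteDimensional ℝ V]
    (J : V →ₗ[ℝ] V) (hiso : ∀ x : V, ‖J x‖ = ‖x‖) (hsq : ∀ x : V, J (J x) = -x)
    (σ : V →ₗ[ℝ] V →ₗ[ℝ] ℝ) (halt : ∀ x : V, σ x x = 0)
    (htame : ∀ x : V, x ≠ 0 → 0 < σ x (J x))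
    (W : Submodule ℝ V) (hW : W ≠ ⊥)
    (hangle : betaT σ * Real.sin (angMM W (W.map J)) < alphaT (⇑J) σ) :
    (∀ x ∈ W, x ≠ 0 → 0 < σ x ((Submodule.orthogonalProjectionOnto W (J x) : W) : V)) ∧
    (∀ x ∈ W, x ≠ 0 → ∃ y ∈ W, σ x y ≠ 0) := by
  obtain ⟨x0, hx0W, hx00⟩ := Submodule.exists_mem_ne_zero_of_ne_bot hW
  -- J preserves inner products
  have hJinner : ∀ u v : V, (inner ℝ (J u) (J v) : ℝ) = inner ℝ u v := by
    intro u v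
    have h1 := norm_add_sq_real (J u) (J v)
    have h2 := norm_add_sq_real u v
    rw [← map_add, hiso, hiso, hiso] at h1
    linarith
  have hxJx : ∀ u : V, (inner ℝ u (J u) : ℝ) = 0 := by
    intro u
    have h1 := hJinner u (J u)
    rw [hsq, inner_neg_right, real_inner_comm] at h1
    linarith
  have hJne : ∀ u : V, u ≠ 0 → J u ≠ 0 := by
    intro u hu h
    apply hu
    have := hiso u
    rw [h, norm_zero] at this
    exact norm_eq_zero.mp this.symm
  -- alpha facts
  have hAlow : BddBelow {r : ℝ | ∃ x : V, ‖x‖ = 1 ∧ r = σ x (J x)} := by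
    refine ⟨0, fun r hr => ?_⟩
    obtain ⟨u, hu, rfl⟩ := hr
    refine (htame u ?_).le
    intro h; rw [h, norm_zero] at hu; norm_num at hu
  have halpha : alphaT (⇑J) σ = sInf {r : ℝ | ∃ x : V, ‖x‖ = 1 ∧ r = σ x (J x)} := rfl
  have hbeta : betaT σ = sSup {r : ℝ | ∃ x y : V, LinearIndependent ℝ ![x, y] ∧
      r = σ x y / Real.sqrt (‖x‖ ^ 2 * ‖y‖ ^ 2 - (inner ℝ x y : ℝ) ^ 2)} := rfl
  have hangMv_eq : ∀ y' : V, angMv W y' = sInf ((fun z => ang z y') '' {z : V | z ∈ W ∧ z ≠ 0}) :=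
    fun _ => rfl
  have hangMM_eq : angMM W (W.map J)
      = sSup ((fun y' => angMv W y') '' {y' : V | y' ∈ W.map J ∧ y' ≠ 0}) := rfl
  have key1 : ∀ u : V, u ≠ 0 → alphaT (⇑J) σ * ‖u‖ ^ 2 ≤ σ u (J u) := by
    intro u hu
    have hun : (0:ℝ) < ‖u‖ := norm_pos_iff.mpr hu
    set v := ‖u‖⁻¹ • u with hv
    have hv1 : ‖v‖ = 1 := by
      rw [hv, norm_smul, norm_inv, norm_norm, inv_mul_cancel₀ (ne_of_gt hun)]
    have hle : alphaT (⇑J) σ ≤ σ v (J v) := by rw [halpha]; exact csInf_le hAlow ⟨v, hv1, rfl⟩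
    have hval : σ v (J v) = ‖u‖⁻¹ ^ 2 * σ u (J u) := by
      rw [hv, map_smul, map_smul, map_smul, LinearMap.smul_apply, smul_eq_mul, smul_eq_mul]
      ring
    rw [hval] at hle
    have h2 : (0:ℝ) < ‖u‖ ^ 2 := by positivity
    calc alphaT (⇑J) σ * ‖u‖ ^ 2 ≤ (‖u‖⁻¹ ^ 2 * σ u (J u)) * ‖u‖ ^ 2 :=
          mul_le_mul_of_nonneg_right hle h2.le
      _ = σ u (J u) := by field_simp
  -- beta facts
  have hBdd := betaT_bddAbove' σ halt
  have hb0 : 0 ≤ betaT σ := by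
    have hmem : σ x0 (J x0) / Real.sqrt (‖x0‖ ^ 2 * ‖J x0‖ ^ 2 - (inner ℝ x0 (J x0) : ℝ) ^ 2)
        ∈ {r : ℝ | ∃ x y : V, LinearIndependent ℝ ![x, y] ∧
          r = σ x y / Real.sqrt (‖x‖ ^ 2 * ‖y‖ ^ 2 - (inner ℝ x y : ℝ) ^ 2)} :=
      ⟨x0, J x0, pair_indep hx00 (hJne x0 hx00) (hxJx x0), rfl⟩
    have hle := le_csSup hBdd hmem
    rw [← hbeta] at hle
    exact le_trans (div_nonneg (htame x0 hx00).le (Real.sqrt_nonneg _)) hle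
  set s := Real.sin (angMM W (W.map J)) with hs_def
  -- bddness of angMv family
  have hangBddBelow : ∀ y' : V, BddBelow ((fun z => ang z y') '' {z : V | z ∈ W ∧ z ≠ 0}) := by
    intro y'
    exact ⟨0, by rintro r ⟨z, hz, rfl⟩; exact ang_nonneg z y'⟩
  have hangMv_le : ∀ y' : V, angMv W y' ≤ π / 2 := by
    intro y'
    rw [hangMv_eq y']
    refine le_trans (csInf_le (hangBddBelow y') ⟨x0, ⟨hx0W, hx00⟩, rfl⟩) ?_
    exact ang_le_pi_div_two x0 y'
  have hangMM_bdd : BddAbove ((fun y' => angMv W y') '' {y' : V | y' ∈ W.map J ∧ y' ≠ 0}) :=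
    ⟨π / 2, by rintro r ⟨y', hy', rfl⟩; exact hangMv_le y'⟩
  have hMM_le : angMM W (W.map J) ≤ π / 2 := by
    rw [hangMM_eq]
    apply csSup_le
    · exact ⟨angMv W (J x0), ⟨J x0, ⟨⟨x0, hx0W, rfl⟩, hJne x0 hx00⟩, rfl⟩⟩
    · rintro r ⟨y', hy', rfl⟩; exact hangMv_le y'
  -- main pointwise claim
  have key : ∀ x ∈ W, x ≠ 0 → 0 < σ x ((Submodule.orthogonalProjectionOnto W (J x) : W) : V) := by
    intro x hxW hx0
    have hxn : (0:ℝ) < ‖x‖ := norm_pos_iff.mpr hx0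
    set y := J x with hy_def
    have hy0 : y ≠ 0 := hJne x hx0
    have hyn : ‖y‖ = ‖x‖ := hiso x
    have hynpos : (0:ℝ) < ‖y‖ := by rw [hyn]; exact hxn
    set p : V := ((Submodule.orthogonalProjectionOnto W y : W) : V) with hp_def
    set q : V := y - p with hq_def
    have hpW : p ∈ W := Submodule.coe_mem _
    have hpq_sum : p + q = y := by rw [hq_def]; abel
    -- inner x q = 0
    have hxq : (inner ℝ x q : ℝ) = 0 := by
      have h0 := W.starProjection_inner_eq_zero y x hxW
      rw [real_inner_comm]
      exact h0
    -- inner p q = 0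
    have hpq : (inner ℝ p q : ℝ) = 0 := by
      have h0 := W.starProjection_inner_eq_zero y p hpW
      rw [real_inner_comm]
      exact h0
    -- Pythagoras
    have hpyth : ‖y‖ ^ 2 = ‖p‖ ^ 2 + ‖q‖ ^ 2 := by
      rw [← hpq_sum, norm_add_sq_real, hpq]
      ring
    have hple : ‖p‖ ≤ ‖y‖ := by nlinarith [norm_nonneg p, norm_nonneg q, norm_nonneg y]
    -- the angle bound : ‖q‖ ≤ ‖x‖ * s
    have hqle : ‖q‖ ≤ ‖x‖ * s := by
      set t : ℝ := ‖p‖ / ‖y‖ with ht_def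
      have ht0 : 0 ≤ t := by positivity
      have ht1 : t ≤ 1 := div_le_one_of_le₀ hple (norm_nonneg y)
      set a := Real.arccos t with ha_def
      have hsina : Real.sin a = ‖q‖ / ‖y‖ := by
        rw [ha_def, Real.sin_arccos]
        have he : 1 - t ^ 2 = (‖q‖ / ‖y‖) ^ 2 := by
          rw [ht_def]
          field_simp
          nlinarith
        rw [he, Real.sqrt_sq (by positivity)]
      have hyJW : y ∈ W.map J := ⟨x, hxW, rfl⟩
      have ha1 : a ≤ angMv W y := by
        rw [hangMv_eq y]
        have hne : ((fun z => ang z y) '' {z : V | z ∈ W ∧ z ≠ 0}).Nonempty :=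
          ⟨ang x y, ⟨x, ⟨hxW, hx0⟩, rfl⟩⟩
        apply le_csInf hne
        rintro r ⟨z, ⟨hzW, hz0⟩, rfl⟩
        have hzn : (0:ℝ) < ‖z‖ := norm_pos_iff.mpr hz0
        have hzy : (inner ℝ z y : ℝ) = inner ℝ z p := by
          have h0 := W.starProjection_inner_eq_zero y z hzW
          have h1 : (inner ℝ z (y - p) : ℝ) = 0 := by rw [real_inner_comm]; exact h0
          rw [inner_sub_right] at h1
          linarith
        have hratio : |(inner ℝ z y : ℝ)| / (‖z‖ * ‖y‖) ≤ t := by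
          rw [hzy, ht_def, div_le_div_iff₀ (by positivity) hynpos]
          have h1 : |(inner ℝ z p : ℝ)| ≤ ‖z‖ * ‖p‖ := abs_real_inner_le_norm z p
          nlinarith
        have hm1 : |(inner ℝ z y : ℝ)| / (‖z‖ * ‖y‖) ∈ Set.Icc (-1:ℝ) 1 := by
          constructor
          · have : (0:ℝ) ≤ |(inner ℝ z y : ℝ)| / (‖z‖ * ‖y‖) := by positivity
            linarith
          · rw [div_le_one (by positivity)]
            exact abs_real_inner_le_norm z y
        have hm2 : t ∈ Set.Icc (-1:ℝ) 1 := ⟨by linarith, ht1⟩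
        exact Real.strictAntiOn_arccos.antitoneOn hm1 hm2 hratio
      have ha2 : angMv W y ≤ angMM W (W.map J) := by
        rw [hangMM_eq]
        exact le_csSup hangMM_bdd ⟨y, ⟨hyJW, hy0⟩, rfl⟩
      have ha0 : 0 ≤ a := Real.arccos_nonneg t
      have hale : a ≤ π / 2 := Real.arccos_le_pi_div_two.mpr ht0
      have hpi : (0:ℝ) < π := Real.pi_pos
      have hsin_le : Real.sin a ≤ s := by
        rw [hs_def]
        apply Real.strictMonoOn_sin.monotoneOn
        · exact ⟨by linarith, hale⟩
        · exact ⟨by linarith, hMM_le⟩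
        · exact le_trans ha1 ha2
      have : ‖q‖ = ‖y‖ * Real.sin a := by
        rw [hsina]; field_simp
      rw [this, ← hyn]
      calc ‖y‖ * Real.sin a ≤ ‖y‖ * s := mul_le_mul_of_nonneg_left hsin_le (norm_nonneg y)
        _ = ‖y‖ * s := rfl
    -- cross term bound
    have hcross : σ x q ≤ betaT σ * (‖x‖ * ‖q‖) := by
      by_cases hq : q = 0
      · rw [hq, map_zero, norm_zero, mul_zero, mul_zero]
      · have hmem : σ x q / Real.sqrt (‖x‖ ^ 2 * ‖q‖ ^ 2 - (inner ℝ x q : ℝ) ^ 2)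
            ∈ {r : ℝ | ∃ u v : V, LinearIndependent ℝ ![u, v] ∧
              r = σ u v / Real.sqrt (‖u‖ ^ 2 * ‖v‖ ^ 2 - (inner ℝ u v : ℝ) ^ 2)} :=
          ⟨x, q, pair_indep hx0 hq hxq, rfl⟩
        have hle := le_csSup hBdd hmem
        rw [← hbeta] at hle
        have hqn : (0:ℝ) < ‖q‖ := norm_pos_iff.mpr hq
        have hsqrt : Real.sqrt (‖x‖ ^ 2 * ‖q‖ ^ 2 - (inner ℝ x q : ℝ) ^ 2) = ‖x‖ * ‖q‖ := by
          have he : ‖x‖ ^ 2 * ‖q‖ ^ 2 - (inner ℝ x q : ℝ) ^ 2 = (‖x‖ * ‖q‖) ^ 2 := by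
            rw [hxq]; ring
          rw [he, Real.sqrt_sq (by positivity)]
        rw [hsqrt, div_le_iff₀ (by positivity)] at hle
        linarith [hle]
    -- combine
    have h1 : alphaT (⇑J) σ * ‖x‖ ^ 2 ≤ σ x y := key1 x hx0
    have hsum : σ x y = σ x p + σ x q := by
      rw [← hpq_sum, map_add]
    have h4 : betaT σ * (‖x‖ * ‖q‖) ≤ betaT σ * (‖x‖ * (‖x‖ * s)) := by
      apply mul_le_mul_of_nonneg_left _ hb0
      exact mul_le_mul_of_nonneg_left hqle hxn.le
    have h5 : betaT σ * (‖x‖ * (‖x‖ * s)) = (betaT σ * s) * ‖x‖ ^ 2 := by ring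
    have h6 : 0 < (alphaT (⇑J) σ - betaT σ * s) * ‖x‖ ^ 2 := by
      apply mul_pos _ (by positivity)
      rw [hs_def] at *
      linarith [hangle]
    have h7 : (alphaT (⇑J) σ - betaT σ * s) * ‖x‖ ^ 2
        = alphaT (⇑J) σ * ‖x‖ ^ 2 - (betaT σ * s) * ‖x‖ ^ 2 := by ring
    linarith [h1, hcross, h4, h5, h6, h7, hsum]
  refine ⟨key, fun x hxW hx0 => ?_⟩
  exact ⟨((Submodule.orthogonalProjectionOnto W (J x) : W) : V), Submodule.coe_mem _, (key x hxW hx0).ne'⟩
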